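/- Let (X,𝒳,μ,{T_t}) be a flow on a compact metric space with μ a Borel probability measure and suppose μ-almost every point is generic for μ (Birkhoff averages along [0,N] of every continuous function converge to the space average). Let ψ₀ ∈ X be a generic point and let φ ∈ X be a point whose orbit closure contains ψ₀. Then φ is quasi-generic for μ: there exists a sequence of intervals I_N ⊆ ℝ with diam(I_N) → ∞ such that (1/m(I_N)) ∫_{I_N} f(T_tφ) dt → ∫ f dμ for every continuous f on X. -/

import Mathlib

open MeasureTheory Filter
open scoped ENNReal

/-- **Quasi-genericity from genericity.**  Let `{T_t}` be a continuous measure-preserving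
flow on a compact metric space `X` with `μ` a Borel probability measure such that μ-a.e.
point is generic for `μ`.  If `ψ₀` is a generic point and the orbit closure of `φ` contains
`ψ₀`, then `φ` is quasi-generic for `μ`: there exist intervals `I_N = [a_N, b_N]` with
`b_N - a_N → ∞` along which the averages of every continuous function at `T_t φ` converge
to its space average. -/
theorem quasi_generic_of_generic_in_orbit_closure
    {X : Type*} [MetricSpace X] [CompactSpace X] [MeasurableSpace X] [BorelSpace X]
    (μ : Measure X) [IsProbabilityMeasure μ]
    (T : ℝ → X → X)
    (hTcont : Continuous fun p : ℝ × X => T p.1 p.2)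
    (hT0 : T 0 = id)
    (hTadd : ∀ s t : ℝ, T (s + t) = T s ∘ T t)
    (hTmp : ∀ t : ℝ, MeasurePreserving (T t) μ μ)
    (hae_generic : ∀ᵐ x ∂μ, ∀ f : C(X, ℝ),
      Tendsto (fun R : ℝ => R⁻¹ * ∫ t in Set.Icc (0 : ℝ) R, f (T t x))
        atTop (nhds (∫ y, f y ∂μ)))
    (ψ₀ : X)
    (hψ₀generic : ∀ f : C(X, ℝ),
      Tendsto (fun R : ℝ => R⁻¹ * ∫ t in Set.Icc (0 : ℝ) R, f (T t ψ₀))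
        atTop (nhds (∫ y, f y ∂μ)))
    (φ : X) (hφ : ψ₀ ∈ closure (Set.range fun t : ℝ => T t φ)) :
    ∃ a b : ℕ → ℝ, (∀ n, a n ≤ b n) ∧
      Tendsto (fun n => b n - a n) atTop atTop ∧
      ∀ f : C(X, ℝ),
        Tendsto (fun n => (b n - a n)⁻¹ * ∫ t in Set.Icc (a n) (b n), f (T t φ))
          atTop (nhds (∫ y, f y ∂μ)) := by
  classical
  have : Nonempty X := ⟨ψ₀⟩
  -- continuity of t ↦ h (T t x)
  have hcont1 : ∀ (x : X) (h : C(X, ℝ)), Continuous fun t : ℝ => h (T t x) := fun x h =>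
    h.continuous.comp (hTcont.comp (continuous_id.prodMk continuous_const))
  -- continuity of y ↦ h (T t y)
  have hcont2 : ∀ (t : ℝ) (h : C(X, ℝ)), Continuous fun y : X => h (T t y) := fun t h =>
    h.continuous.comp (hTcont.comp (continuous_const.prodMk continuous_id))
  -- change of variables
  have key : ∀ (c R : ℝ), 0 ≤ R → ∀ h : C(X, ℝ),
      ∫ t in Set.Icc c (c + R), h (T t φ) = ∫ t in Set.Icc 0 R, h (T t (T c φ)) := by
    intro c R hR h
    have h1 : ∀ t : ℝ, h (T t (T c φ)) = h (T (t + c) φ) := by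
      intro t; rw [hTadd t c]; rfl
    rw [integral_Icc_eq_integral_Ioc, integral_Icc_eq_integral_Ioc,
        ← intervalIntegral.integral_of_le (by linarith : c ≤ c + R),
        ← intervalIntegral.integral_of_le hR]
    simp only [h1]
    rw [intervalIntegral.integral_comp_add_right (fun t => h (T t φ)) c]
    norm_num [add_comm]
  -- uniform bound on set integrals
  have bnd : ∀ (a b : ℝ), a ≤ b → ∀ (x : X) (h : C(X, ℝ)),
      ‖∫ t in Set.Icc a b, h (T t x)‖ ≤ ‖h‖ * (b - a) := by
    intro a b hab x h
    have h1 : volume (Set.Icc a b) < ⊤ := by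
      rw [Real.volume_Icc]; exact ENNReal.ofReal_lt_top
    have := norm_setIntegral_le_of_norm_le_const (C := ‖h‖) h1
      (fun t _ => h.norm_coe_le_norm (T t x)) (f := fun t => h (T t x))
    rwa [measureReal_def, Real.volume_Icc, ENNReal.toReal_ofReal (by linarith)] at this
  -- dominated convergence along a converging sequence of base points
  have domconv : ∀ (R : ℝ) (h : C(X, ℝ)) (x : ℕ → X) (x₀ : X),
      Tendsto x atTop (nhds x₀) →
      Tendsto (fun m => ∫ t in Set.Icc (0 : ℝ) R, h (T t (x m))) atTop
        (nhds (∫ t in Set.Icc (0 : ℝ) R, h (T t x₀))) := by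
    intro R h x x₀ hx
    apply tendsto_integral_of_dominated_convergence (fun _ => ‖h‖)
    · intro m; exact ((hcont1 (x m) h)).aestronglyMeasurable.restrict
    · exact integrableOn_const (by rw [Real.volume_Icc]; exact ENNReal.ofReal_ne_top)
    · intro m; filter_upwards with t; exact h.norm_coe_le_norm _
    · filter_upwards with t
      exact (((hcont2 t h).tendsto x₀).comp hx)
  -- a sequence along the orbit converging to ψ₀
  obtain ⟨u, hu_mem, hu_tend⟩ := mem_closure_iff_seq_limit.1 hφ
  choose s hs using hu_mem
  have hs_tend : Tendsto (fun m => T (s m) φ) atTop (nhds ψ₀) := by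
    simpa only [hs] using hu_tend
  -- dense sequence in C(X,ℝ)
  obtain ⟨g, hg⟩ := TopologicalSpace.exists_dense_seq C(X, ℝ)
  -- main selection
  have main : ∀ n : ℕ, ∃ R c : ℝ, ((n : ℝ) + 1 ≤ R) ∧ ∀ k ≤ n,
      |R⁻¹ * (∫ t in Set.Icc (0 : ℝ) R, g k (T t (T c φ))) - ∫ y, g k y ∂μ| < 2 / (n + 1) := by
    intro n
    have hpos : (0 : ℝ) < 1 / (n + 1) := by positivity
    have hev : ∀ᶠ R in (atTop : Filter ℝ), ((n : ℝ) + 1 ≤ R ∧ ∀ k ∈ Finset.range (n + 1),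
        |R⁻¹ * (∫ t in Set.Icc (0 : ℝ) R, g k (T t ψ₀)) - ∫ y, g k y ∂μ| < 1 / (n + 1)) := by
      refine (eventually_ge_atTop _).and ?_
      rw [eventually_all_finset]
      intro k _
      have := Metric.tendsto_nhds.1 (hψ₀generic (g k)) (1 / (n + 1)) hpos
      simpa [Real.dist_eq] using this
    obtain ⟨R, hR1, hR2⟩ := hev.exists
    refine ⟨R, ?_⟩
    have hRpos : (0 : ℝ) < R := lt_of_lt_of_le (by positivity) hR1
    have hev2 : ∀ᶠ m in (atTop : Filter ℕ), ∀ k ∈ Finset.range (n + 1),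
        |R⁻¹ * (∫ t in Set.Icc (0 : ℝ) R, g k (T t (T (s m) φ))) -
          R⁻¹ * ∫ t in Set.Icc (0 : ℝ) R, g k (T t ψ₀)| < 1 / (n + 1) := by
      rw [eventually_all_finset]
      intro k _
      have := ((domconv R (g k) (fun m => T (s m) φ) ψ₀ hs_tend).const_mul R⁻¹)
      have := Metric.tendsto_nhds.1 this (1 / (n + 1)) hpos
      simpa [Real.dist_eq] using this
    obtain ⟨m, hm⟩ := hev2.exists
    refine ⟨s m, hR1, fun k hk => ?_⟩
    have hk' : k ∈ Finset.range (n + 1) := Finset.mem_range_succ_iff.2 hk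
    have h1 := hm k hk'
    have h2 := hR2 k hk'
    calc |R⁻¹ * (∫ t in Set.Icc (0 : ℝ) R, g k (T t (T (s m) φ))) - ∫ y, g k y ∂μ|
        ≤ |R⁻¹ * (∫ t in Set.Icc (0 : ℝ) R, g k (T t (T (s m) φ))) -
            R⁻¹ * ∫ t in Set.Icc (0 : ℝ) R, g k (T t ψ₀)| +
          |R⁻¹ * (∫ t in Set.Icc (0 : ℝ) R, g k (T t ψ₀)) - ∫ y, g k y ∂μ| := abs_sub_le _ _ _
      _ < 1 / (n + 1) + 1 / (n + 1) := add_lt_add h1 h2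
      _ = 2 / (n + 1) := by ring
  choose R c hR hRc using main
  refine ⟨c, fun n => c n + R n, fun n => by show c n ≤ c n + R n; have := hR n; have : (0:ℝ) ≤ (n:ℝ) := Nat.cast_nonneg n; linarith, ?_, ?_⟩
  · have : ∀ n : ℕ, (n : ℝ) + 1 ≤ c n + R n - c n := by intro n; simpa using hR n
    exact tendsto_atTop_mono this (tendsto_atTop_add_const_right _ 1 tendsto_natCast_atTop_atTop)
  intro f
  -- rewrite the averages
  have hRpos : ∀ n, (0 : ℝ) < R n := fun n => lt_of_lt_of_le (by positivity) (hR n)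
  have hb : ∀ n (h : C(X, ℝ)),
      (c n + R n - c n)⁻¹ * (∫ t in Set.Icc (c n) (c n + R n), h (T t φ))
        = (R n)⁻¹ * ∫ t in Set.Icc (0 : ℝ) (R n), h (T t (T (c n) φ)) := by
    intro n h
    rw [key (c n) (R n) (hRpos n).le h, add_sub_cancel_left]
  rw [Metric.tendsto_nhds]
  intro ε hε
  obtain ⟨k, hk⟩ := hg.exists_dist_lt f (by positivity : (0 : ℝ) < ε / 3)
  have hnormfg : ‖f - g k‖ < ε / 3 := by rwa [← dist_eq_norm]
  have hev1 : ∀ᶠ n : ℕ in atTop, 2 / ((n : ℝ) + 1) < ε / 3 := by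
    have : Tendsto (fun n : ℕ => 2 / ((n : ℝ) + 1)) atTop (nhds 0) :=
      tendsto_const_nhds.div_atTop (tendsto_atTop_add_const_right _ 1 tendsto_natCast_atTop_atTop)
    exact (this.eventually (eventually_lt_nhds (by positivity : (0:ℝ) < ε/3)))
  filter_upwards [hev1, eventually_ge_atTop k] with n hn hkn
  rw [Real.dist_eq]
  set L : C(X, ℝ) → ℝ := fun h =>
    (c n + R n - c n)⁻¹ * (∫ t in Set.Icc (c n) (c n + R n), h (T t φ)) with hL
  -- difference between L f and L (g k)
  have hint : ∀ h : C(X, ℝ), IntegrableOn (fun t => h (T t φ)) (Set.Icc (c n) (c n + R n)) :=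
    fun h => (hcont1 φ h).integrableOn_Icc
  have hdiff1 : |L f - L (g k)| ≤ ‖f - g k‖ := by
    have hsub : L f - L (g k) = (c n + R n - c n)⁻¹ *
        (∫ t in Set.Icc (c n) (c n + R n), (f - g k) (T t φ)) := by
      rw [hL]
      simp only [ContinuousMap.sub_apply]
      rw [integral_sub (hint f) (hint (g k))]
      ring
    have hb2 := bnd (c n) (c n + R n) (by nlinarith [hRpos n]) φ (f - g k)
    rw [hsub]
    rw [abs_mul, abs_inv]
    have h3 : |c n + R n - c n| = R n := by
      rw [add_sub_cancel_left, abs_of_pos (hRpos n)]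
    rw [h3]
    rw [Real.norm_eq_abs] at hb2
    calc (R n)⁻¹ * |∫ t in Set.Icc (c n) (c n + R n), (f - g k) (T t φ)|
        ≤ (R n)⁻¹ * (‖f - g k‖ * (c n + R n - c n)) := by
          exact mul_le_mul_of_nonneg_left hb2 (inv_nonneg.2 (hRpos n).le)
      _ = ‖f - g k‖ := by field_simp [add_sub_cancel_left, (hRpos n).ne']; ring
  -- L (g k) close to integral
  have hdiff2 : |L (g k) - ∫ y, g k y ∂μ| < 2 / (n + 1) := by
    rw [hL]; simp only; rw [hb n (g k)]; exact hRc n k hkn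
  -- integral of g k close to integral of f
  have hdiff3 : |(∫ y, g k y ∂μ) - ∫ y, f y ∂μ| ≤ ‖f - g k‖ := by
    have hintf : Integrable (fun y => f y) μ := f.continuous.integrable_of_hasCompactSupport
      (HasCompactSupport.of_compactSpace _)
    have hintg : Integrable (fun y => g k y) μ := (g k).continuous.integrable_of_hasCompactSupport
      (HasCompactSupport.of_compactSpace _)
    have : (∫ y, g k y ∂μ) - ∫ y, f y ∂μ = ∫ y, (g k - f) y ∂μ := by
      simp only [ContinuousMap.sub_apply]
      rw [integral_sub hintg hintf]
    rw [this]
    have h4 : ∀ᵐ y ∂μ, ‖(g k - f) y‖ ≤ ‖g k - f‖ := by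
      filter_upwards with y; exact (g k - f).norm_coe_le_norm y
    have := norm_integral_le_of_norm_le_const h4 (f := fun y => (g k - f) y)
    simp only [measureReal_def, measure_univ, ENNReal.toReal_one, mul_one] at this
    rw [Real.norm_eq_abs] at this
    calc |∫ y, (g k - f) y ∂μ| ≤ ‖g k - f‖ := this
      _ = ‖f - g k‖ := norm_sub_rev _ _
  calc |L f - ∫ y, f y ∂μ|
      ≤ |L f - L (g k)| + |L (g k) - ∫ y, g k y ∂μ| + |(∫ y, g k y ∂μ) - ∫ y, f y ∂μ| := by
        have := abs_sub_le (L f) (L (g k)) (∫ y, f y ∂μ)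
        have := abs_sub_le (L (g k)) (∫ y, g k y ∂μ) (∫ y, f y ∂μ)
        linarith [abs_sub_le (L f) (L (g k)) (∫ y, f y ∂μ),
          abs_sub_le (L (g k)) (∫ y, g k y ∂μ) (∫ y, f y ∂μ)]
      _ < ε / 3 + ε / 3 + ε / 3 := by
        refine add_lt_add_of_lt_of_le (add_lt_add_of_le_of_lt ?_ ?_) ?_
        · linarith
        · linarith
        · linarith
      _ = ε := by ring
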